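/- Let α ∈ (1/3, 1/2), θ = 3α > 1, and let D : {(s,t) : 0 ≤ s ≤ t ≤ T} → ℝ^v be a function such that the coboundary D(s,r,t) := D(s,t) - D(s,r) - D(r,t) satisfies sup_{0≤s<r<t≤T} |D(s,r,t)|/(t-s)^θ =: A < ∞. Suppose X̂ : [0,T] → ℝ^v is continuous and there exists L with |X̂_t - X̂_s - D(s,t)| ≤ L (t-s)^θ for all s ≤ t. Then the optimal L satisfies L ≤ K · A for a universal constant K depending only on θ. -/

import Mathlib

/-- **Sewing lemma estimate.** Let `θ = 3α > 1` with `α ∈ (1/3, 1/2)`. If the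
coboundary `D(s,t) - D(s,r) - D(r,t)` is bounded by `A (t-s)^θ` and `X̂` is a
continuous path whose increments are approximated by `D` with a `θ`-Hölder remainder
(constant `L₀`), then the remainder is in fact bounded by `K·A (t-s)^θ` for a
universal constant `K` depending only on `θ`. -/
theorem sewing_estimate (α θ : ℝ) (hα₁ : 1 / 3 < α) (hα₂ : α < 1 / 2)
    (hθ : θ = 3 * α) :
    ∃ K : ℝ, 0 < K ∧
      ∀ (v : ℕ) (T : ℝ), 0 < T →
        ∀ (D : ℝ → ℝ → EuclideanSpace ℝ (Fin v))
          (X : ℝ → EuclideanSpace ℝ (Fin v)) (A L₀ : ℝ),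
          0 ≤ A → 0 ≤ L₀ →
          ContinuousOn X (Set.Icc 0 T) →
          (∀ s r t : ℝ, 0 ≤ s → s < r → r < t → t ≤ T →
            ‖D s t - D s r - D r t‖ ≤ A * (t - s) ^ θ) →
          (∀ s t : ℝ, 0 ≤ s → s ≤ t → t ≤ T →
            ‖X t - X s - D s t‖ ≤ L₀ * (t - s) ^ θ) →
          ∀ s t : ℝ, 0 ≤ s → s ≤ t → t ≤ T →
            ‖X t - X s - D s t‖ ≤ K * A * (t - s) ^ θ := by
  have hθ1 : 1 < θ := by nlinarith
  set c : ℝ := (2 : ℝ) ^ (1 - θ) with hc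
  have hc0 : 0 < c := Real.rpow_pos_of_pos two_pos _
  have hc1 : c < 1 := Real.rpow_lt_one_of_one_lt_of_neg one_lt_two (by linarith)
  have h1c : 0 < 1 - c := by linarith
  have h1c' : (1 : ℝ) - c ≠ 0 := ne_of_gt h1c
  refine ⟨1 / (1 - c), div_pos one_pos h1c, ?_⟩
  set K : ℝ := 1 / (1 - c) with hK
  have hK0 : 0 < K := div_pos one_pos h1c
  have hKc : c * K + 1 = K := by
    rw [hK]
    field_simp
    ring
  intro v T hT D X A L₀ hA hL₀ _hX hcob happ s t hs hst htT
  -- main induction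
  have main : ∀ n : ℕ, ∀ s t : ℝ, 0 ≤ s → s ≤ t → t ≤ T →
      ‖X t - X s - D s t‖ ≤ (c ^ n * L₀ + K * A) * (t - s) ^ θ := by
    intro n
    induction n with
    | zero =>
      intro s t hs hst htT
      have hpow : (0:ℝ) ≤ (t - s) ^ θ := Real.rpow_nonneg (by linarith) _
      have := happ s t hs hst htT
      have hKA : (0:ℝ) ≤ K * A := mul_nonneg hK0.le hA
      nlinarith
    | succ n ih =>
      intro s t hs hst htT
      rcases eq_or_lt_of_le hst with rfl | hlt
      · have := happ s s hs le_rfl htT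
        simp only [sub_self] at this ⊢
        have h0 : (0:ℝ) ^ θ = 0 := Real.zero_rpow (by linarith)
        rw [h0] at this ⊢
        simpa using this
      · set r : ℝ := (s + t) / 2 with hr
        have hsr : s < r := by rw [hr]; linarith
        have hrt : r < t := by rw [hr]; linarith
        have h1 := ih s r hs hsr.le (by linarith)
        have h2 := ih r t (by linarith) hrt.le htT
        have h3 := hcob s r t hs hsr hrt htT
        have hdecomp : X t - X s - D s t =
            (X r - X s - D s r) + (X t - X r - D r t) - (D s t - D s r - D r t) := by
          abel
        have htri : ‖X t - X s - D s t‖ ≤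
            ‖X r - X s - D s r‖ + ‖X t - X r - D r t‖ + ‖D s t - D s r - D r t‖ := by
          rw [hdecomp]
          exact (norm_sub_le _ _).trans (by gcongr; exact norm_add_le _ _)
        have hrs : r - s = (t - s) / 2 := by rw [hr]; ring
        have htr : t - r = (t - s) / 2 := by rw [hr]; ring
        have hts0 : (0:ℝ) ≤ t - s := by linarith
        have hhalf : ((t - s) / 2) ^ θ = (t - s) ^ θ * (c / 2) := by
          rw [Real.div_rpow hts0 (by norm_num : (0:ℝ) ≤ 2), hc,
            Real.rpow_sub two_pos, Real.rpow_one]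
          ring
        rw [hrs] at h1
        rw [htr] at h2
        have hB : (0:ℝ) ≤ c ^ n * L₀ + K * A := add_nonneg (mul_nonneg (pow_nonneg hc0.le _) hL₀) (mul_nonneg hK0.le hA)
        calc ‖X t - X s - D s t‖
            ≤ (c ^ n * L₀ + K * A) * ((t - s) / 2) ^ θ +
              (c ^ n * L₀ + K * A) * ((t - s) / 2) ^ θ + A * (t - s) ^ θ := by
              linarith
          _ = (c * (c ^ n * L₀ + K * A) + A) * (t - s) ^ θ := by
              rw [hhalf]; ring
          _ = (c ^ (n+1) * L₀ + K * A) * (t - s) ^ θ := by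
              have : c * (c ^ n * L₀ + K * A) + A = c ^ (n+1) * L₀ + (c * K + 1) * A := by
                ring
              rw [this, hKc]
          _ ≤ (c ^ (n+1) * L₀ + K * A) * (t - s) ^ θ := le_rfl
  -- pass to the limit n → ∞
  have hpow : (0:ℝ) ≤ (t - s) ^ θ := Real.rpow_nonneg (by linarith) _
  have htend : Filter.Tendsto (fun n : ℕ => (c ^ n * L₀ + K * A) * (t - s) ^ θ)
      Filter.atTop (nhds (K * A * (t - s) ^ θ)) := by
    have h0 : Filter.Tendsto (fun n : ℕ => c ^ n) Filter.atTop (nhds 0) :=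
      tendsto_pow_atTop_nhds_zero_of_lt_one hc0.le hc1
    have := ((h0.mul_const L₀).add_const (K * A)).mul_const ((t - s) ^ θ)
    simpa using this
  exact ge_of_tendsto' htend (fun n => main n s t hs hst htT)
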